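/- Let n ≥ 2, let A : ℝ → Mₙ(ℝ) be differentiable, let f : ℝ → ℝⁿ be differentiable, and define X : ℝ × ℝⁿ → ℝⁿ by Xⁱ(t,x) = Σ_{k=1}^n A(t)_{ik} xᵏ + fⁱ(t). Then the temporal torsion components of the canonical generalized Cartan connection produced by this non-homogeneous linear ODEs system, namely R_{(1)1j}^{(i)}(t,x) = (1/2)[ ∂/∂xʲ(∂Xⁱ/∂t)(t,x) − ∂/∂xⁱ(∂Xʲ/∂t)(t,x) ], equal (1/2)(A'(t)_{ij} − A'(t)_{ji}) for all (t,x), where A'(t) is the entrywise derivative of A. -/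

import Mathlib

/-- Partial derivative of `g : ℝⁿ → ℝ` at `x` in the `j`-th coordinate direction. -/
noncomputable def pd {n : ℕ} (g : (Fin n → ℝ) → ℝ) (x : Fin n → ℝ) (j : Fin n) : ℝ :=
  fderiv ℝ g x (Pi.single j 1)

/-- The temporal torsion components produced by the first-order ODE system
`dxⁱ/dt = Xⁱ(t,x)`:
`R_{(1)1j}^{(i)}(t,x) = (1/2)[∂/∂xʲ(∂Xⁱ/∂t) - ∂/∂xⁱ(∂Xʲ/∂t)]`. -/
noncomputable def temporalTorsion {n : ℕ} (X : ℝ → (Fin n → ℝ) → Fin n → ℝ)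
    (t : ℝ) (x : Fin n → ℝ) (i j : Fin n) : ℝ :=
  (1 / 2) * (pd (fun y => deriv (fun s => X s y i) t) x j
           - pd (fun y => deriv (fun s => X s y j) t) x i)

lemma pd_linear {n : ℕ} (c : Fin n → ℝ) (d : ℝ) (x : Fin n → ℝ) (j : Fin n) :
    pd (fun y => (∑ k : Fin n, c k * y k) + d) x j = c j := by
  set L : (Fin n → ℝ) →L[ℝ] ℝ := ∑ k : Fin n, c k • (ContinuousLinearMap.proj k)
  have hL : ∀ y, L y = ∑ k : Fin n, c k * y k := by
    intro y
    simp [L, ContinuousLinearMap.sum_apply]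
  have h : HasFDerivAt (fun y => (∑ k : Fin n, c k * y k) + d) L x := by
    have : HasFDerivAt (fun y : Fin n → ℝ => L y + d) L x :=
      (L.hasFDerivAt).add_const d
    simpa [hL] using this
  rw [pd, h.fderiv, hL]
  rw [Finset.sum_eq_single j]
  · simp
  · intro k _ hk; simp [Pi.single_eq_of_ne hk]
  · simp

/-- for the non-homogeneous linear first-order ODEs system
`dxⁱ/dt = ∑ₖ A(t)_{ik} xᵏ + fⁱ(t)` with differentiable `A` and `f`, the temporal
torsion components equal `(1/2)(A'(t)_{ij} - A'(t)_{ji})`. -/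
theorem temporal_torsion_of_linear_system
    (n : ℕ) (hn : 2 ≤ n)
    (A : ℝ → Matrix (Fin n) (Fin n) ℝ) (f : ℝ → Fin n → ℝ)
    (hA : ∀ i j : Fin n, Differentiable ℝ (fun t => A t i j))
    (hf : ∀ i : Fin n, Differentiable ℝ (fun t => f t i)) :
    ∀ (t : ℝ) (x : Fin n → ℝ) (i j : Fin n),
      temporalTorsion (fun t x i => (∑ k : Fin n, A t i k * x k) + f t i) t x i j
        = (1 / 2) * (deriv (fun s => A s i j) t - deriv (fun s => A s j i) t) := by
  intro t x i j
  have key : ∀ (i : Fin n) (y : Fin n → ℝ),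
      deriv (fun s => (∑ k : Fin n, A s i k * y k) + f s i) t
        = (∑ k : Fin n, deriv (fun s => A s i k) t * y k) + deriv (fun s => f s i) t := by
    intro i y
    have hsum : HasDerivAt (fun s => ∑ k : Fin n, A s i k * y k)
        (∑ k : Fin n, deriv (fun s => A s i k) t * y k) t := by
      apply HasDerivAt.fun_sum
      intro k _
      exact ((hA i k t).hasDerivAt).mul_const (y k)
    exact (hsum.add ((hf i t).hasDerivAt)).deriv
  unfold temporalTorsion
  beta_reduce
  have h1 : (fun y => deriv (fun s => (∑ k : Fin n, A s i k * y k) + f s i) t)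
      = fun y : Fin n → ℝ => (∑ k : Fin n, deriv (fun s => A s i k) t * y k) + deriv (fun s => f s i) t := by
    funext (y : Fin n → ℝ); exact key i y
  have h2 : (fun y => deriv (fun s => (∑ k : Fin n, A s j k * y k) + f s j) t)
      = fun y : Fin n → ℝ => (∑ k : Fin n, deriv (fun s => A s j k) t * y k) + deriv (fun s => f s j) t := by
    funext (y : Fin n → ℝ); exact key j y
  simp only [h1, h2, pd_linear]
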